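/- arXiv:1606.07522 — 7 statements merged into one kernel-verified Lean document; each statement's English description precedes it below -/
import Mathlib

section
/- If ⪯_w is a well-founded total preorder on W_w and Γ is finite, then the maximal-superset relation ⊑_w^Γ is well-founded on W_w. -/
open Set

/-- Minimal elements of `S` within domain `D` w.r.t. the strict part of `r`. -/
def minOnRel {W : Type*} (r : W → W → Prop) (D S : Set W) : Set W :=
  {v | v ∈ S ∩ D ∧ ∀ u ∈ S ∩ D, ¬ (r u v ∧ ¬ r v u)}

/-- The set of formulas in `Γ` on whose truth `u` agrees with `w`. -/
def agreeSet {W F : Type*} (sat : W → F → Prop) (Γ : Set F) (w u : W) : Set F :=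
  {γ ∈ Γ | (sat u γ ↔ sat w γ)}

/-- `[w]_Γ`: worlds of `Ww` agreeing with `w` on every formula of `Γ`. -/
def cpCls {W F : Type*} (sat : W → F → Prop) (Γ : Set F) (Ww : Set W) (w : W) : Set W :=
  {u ∈ Ww | ∀ γ ∈ Γ, (sat u γ ↔ sat w γ)}

/-- `⊴_w^Γ`: the restriction of `pre` to `[w]_Γ`. -/
def cpRel {W F : Type*} (sat : W → F → Prop) (Γ : Set F) (Ww : Set W)
    (pre : W → W → Prop) (w : W) (u v : W) : Prop :=
  u ∈ cpCls sat Γ Ww w ∧ v ∈ cpCls sat Γ Ww w ∧ pre u v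

/-- The restriction of a relation `pre` to a subset `A`. -/
def restrictRel {W : Type*} (A : Set W) (pre : W → W → Prop) (u v : W) : Prop :=
  u ∈ A ∧ v ∈ A ∧ pre u v

/-- `⪯_w^Γ`: the naive-counting relation. -/
def ncRel {W F : Type*} (sat : W → F → Prop) (Γ : Finset F)
    (pre : W → W → Prop) (w : W) (u v : W) : Prop :=
  (agreeSet sat (↑Γ) w u).ncard > (agreeSet sat (↑Γ) w v).ncard ∨
    ((agreeSet sat (↑Γ) w u).ncard = (agreeSet sat (↑Γ) w v).ncard ∧ pre u v)

/-- `⊑_w^Γ`: the maximal-superset relation. -/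
def msRel {W F : Type*} (sat : W → F → Prop) (Γ : Set F)
    (pre : W → W → Prop) (w : W) (u v : W) : Prop :=
  agreeSet sat Γ w v ⊂ agreeSet sat Γ w u ∨
    (agreeSet sat Γ w v = agreeSet sat Γ w u ∧ pre u v)

theorem msRel_wellFounded {W F : Type*} (sat : W → F → Prop) (Γ : Finset F)
    (Ww : Set W) (pre : W → W → Prop) (w : W)
    (hrefl : ∀ u ∈ Ww, pre u u)
    (htrans : ∀ u ∈ Ww, ∀ v ∈ Ww, ∀ x ∈ Ww, pre u v → pre v x → pre u x)
    (htot : ∀ u ∈ Ww, ∀ v ∈ Ww, pre u v ∨ pre v u)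
    (hwf : ∀ S : Set W, S ⊆ Ww → S.Nonempty →
      ∃ v ∈ S, ∀ u ∈ S, ¬ (pre u v ∧ ¬ pre v u)) :
    ∀ S : Set W, S ⊆ Ww → S.Nonempty →
      ∃ v ∈ S, ∀ u ∈ S,
        ¬ (msRel sat (↑Γ) pre w u v ∧ ¬ msRel sat (↑Γ) pre w v u) := by
  intro S hSW hSne
  set A : W → Set F := fun u => agreeSet sat (↑Γ) w u with hA
  -- the family of agreement sets over S is finite
  have hsub : ∀ u, A u ⊆ (↑Γ : Set F) := fun u γ hγ => hγ.1
  have hfam : (A '' S).Finite := by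
    apply Set.Finite.subset (Γ : Set F).toFinite.finite_subsets
    rintro _ ⟨u, -, rfl⟩
    exact hsub u
  have hfamne : (A '' S).Nonempty := hSne.image A
  obtain ⟨M, hM, hMmax⟩ := Set.Finite.exists_maximalFor id (A '' S) hfam hfamne
  obtain ⟨v0, hv0S, hv0M⟩ := hM
  set T : Set W := {u ∈ S | A u = M} with hT
  have hTsub : T ⊆ Ww := fun u hu => hSW hu.1
  have hTne : T.Nonempty := ⟨v0, hv0S, hv0M⟩
  obtain ⟨v, hvT, hvmin⟩ := hwf T hTsub hTne
  refine ⟨v, hvT.1, ?_⟩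
  rintro u huS ⟨hmuv, hnmvu⟩
  rcases hmuv with hss | ⟨heq, hpuv⟩
  · -- A v ⊂ A u contradicts maximality of M = A v
    have : M = A u := by
      have := @hMmax (A u) ⟨u, huS, rfl⟩
      simp only [id] at this
      exact le_antisymm (hvT.2 ▸ hss.subset) (this (hvT.2 ▸ hss.subset))
    exact hss.ne (hvT.2.trans this)
  · -- A v = A u, pre u v; then u ∈ T and v minimal in T
    have huT : u ∈ T := ⟨huS, heq.symm.trans hvT.2⟩
    have hnpvu : ¬ pre v u := fun h => hnmvu (Or.inr ⟨heq.symm, h⟩)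
    exact hvmin u huT ⟨hpuv, hnpvu⟩
end

section
/- CP existential implies NC existential: if there exists a ⊴_w^Γ-minimal φ-world satisfying ψ under strict agreement semantics (i.e., w satisfies ⟨φ,Γ⟩ψ under CP), then w satisfies ⟨φ,Γ⟩ψ under NC semantics; equivalently, w ∈ ⟦[φ,Γ]ψ⟧_NC implies w ∈ ⟦[φ,Γ]ψ⟧_CP. -/
open Set

/-- Minimal elements of `S` within domain `D` w.r.t. the strict part of `r`. -/
def condMinOn {W : Type*} (r : W → W → Prop) (D S : Set W) : Set W :=
  {v | v ∈ S ∩ D ∧ ∀ u ∈ S ∩ D, ¬ (r u v ∧ ¬ r v u)}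

theorem nc_implies_cp {W F : Type*} (sat : W → F → Prop) (Γ : Finset F)
    (Ww : Set W) (pre : W → W → Prop) (w : W) (P Q : Set W)
    (h : condMinOn (ncRel sat Γ pre w) Ww P ⊆ Q) :
    condMinOn (cpRel sat (↑Γ) Ww pre w) (cpCls sat (↑Γ) Ww w) P ⊆ Q := by
  intro v hv
  obtain ⟨⟨hvP, hvCls⟩, hvmin⟩ := hv
  have hsub : ∀ u, agreeSet sat (↑Γ) w u ⊆ (↑Γ : Set F) := fun u γ hγ => hγ.1
  have hfin : ∀ u, (agreeSet sat (↑Γ) w u).Finite :=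
    fun u => Γ.finite_toSet.subset (hsub u)
  have hvfull : agreeSet sat (↑Γ) w v = (↑Γ : Set F) := by
    apply Set.Subset.antisymm (hsub v)
    intro γ hγ
    exact ⟨hγ, hvCls.2 γ hγ⟩
  apply h
  refine ⟨⟨hvP, hvCls.1⟩, ?_⟩
  rintro u ⟨huP, huWw⟩ ⟨huv, hnvu⟩
  rcases huv with hgt | ⟨heq, hpre⟩
  · -- |agree u| > |agree v| = |Γ| impossible
    have : (agreeSet sat (↑Γ) w u).ncard ≤ (agreeSet sat (↑Γ) w v).ncard := by
      rw [hvfull]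
      exact Set.ncard_le_ncard (hsub u) Γ.finite_toSet
    omega
  · have hufull : agreeSet sat (↑Γ) w u = (↑Γ : Set F) := by
      apply Set.eq_of_subset_of_ncard_le (hsub u) ?_ Γ.finite_toSet
      · have h1 : ((↑Γ : Set F)).ncard = (agreeSet sat (↑Γ) w v).ncard := by
          rw [hvfull]
        omega
    have huCls : u ∈ cpCls sat (↑Γ) Ww w := by
      refine ⟨huWw, fun γ hγ => ?_⟩
      have : γ ∈ agreeSet sat (↑Γ) w u := by rw [hufull]; exact hγ
      exact this.2
    refine hvmin u ⟨huP, huCls⟩ ⟨⟨huCls, hvCls, hpre⟩, ?_⟩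
    rintro ⟨_, _, hpvu⟩
    exact hnvu (Or.inr ⟨heq.symm, hpvu⟩)
end

section
/- If ⟦φ⟧ ∩ [w]_Γ is nonempty, then Min_{⪯_w^Γ}(⟦φ⟧) = Min_{⊴_w^Γ}(⟦φ⟧), i.e., when some φ-world fully agrees with w on Γ, the naive-counting minimal φ-worlds are exactly the strict-agreement minimal φ-worlds. -/
open Set

lemma agree_subset' {W F : Type*} (sat : W → F → Prop) (Γ : Set F) (w u : W) :
    agreeSet sat Γ w u ⊆ Γ := fun _ h => h.1

lemma ncard_agree_le {W F : Type*} (sat : W → F → Prop) (Γ : Finset F) (w u : W) :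
    (agreeSet sat (↑Γ) w u).ncard ≤ Γ.card := by
  rw [← Set.ncard_coe_finset]
  exact Set.ncard_le_ncard (agree_subset' sat _ w u) (Γ.finite_toSet)

lemma mem_cpCls_iff {W F : Type*} (sat : W → F → Prop) (Γ : Finset F) (Ww : Set W) (w u : W) :
    u ∈ cpCls sat (↑Γ) Ww w ↔ u ∈ Ww ∧ agreeSet sat (↑Γ) w u = ↑Γ := by
  constructor
  · rintro ⟨h1, h2⟩
    refine ⟨h1, Set.Subset.antisymm (agree_subset' sat _ w u) ?_⟩
    exact fun γ hγ => ⟨hγ, h2 γ hγ⟩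
  · rintro ⟨h1, h2⟩
    refine ⟨h1, fun γ hγ => ?_⟩
    have : γ ∈ agreeSet sat (↑Γ) w u := h2.symm ▸ hγ
    exact this.2

lemma ncard_eq_iff_cp {W F : Type*} (sat : W → F → Prop) (Γ : Finset F) (Ww : Set W) (w u : W)
    (hu : u ∈ Ww) :
    (agreeSet sat (↑Γ) w u).ncard = Γ.card ↔ u ∈ cpCls sat (↑Γ) Ww w := by
  rw [mem_cpCls_iff]
  constructor
  · intro h
    refine ⟨hu, Set.eq_of_subset_of_ncard_le (agree_subset' sat _ w u) ?_ Γ.finite_toSet⟩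
    rw [Set.ncard_coe_finset, h]
  · rintro ⟨_, h⟩
    rw [h, Set.ncard_coe_finset]

theorem nc_min_eq_cp_min {W F : Type*} (sat : W → F → Prop) (Γ : Finset F)
    (Ww : Set W) (pre : W → W → Prop) (w : W) (P : Set W)
    (hrefl : ∀ u ∈ Ww, pre u u)
    (htrans : ∀ u ∈ Ww, ∀ v ∈ Ww, ∀ x ∈ Ww, pre u v → pre v x → pre u x)
    (htot : ∀ u ∈ Ww, ∀ v ∈ Ww, pre u v ∨ pre v u)
    (hwf : ∀ S : Set W, S ⊆ Ww → S.Nonempty →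
      ∃ v ∈ S, ∀ u ∈ S, ¬ (pre u v ∧ ¬ pre v u))
    (hne : (P ∩ cpCls sat (↑Γ) Ww w).Nonempty) :
    minOnRel (ncRel sat Γ pre w) Ww P =
      minOnRel (cpRel sat (↑Γ) Ww pre w) (cpCls sat (↑Γ) Ww w) P := by
  have hcpW : cpCls sat (↑Γ) Ww w ⊆ Ww := fun u h => h.1
  obtain ⟨p, hpP, hpC⟩ := hne
  have hpcard : (agreeSet sat (↑Γ) w p).ncard = Γ.card :=
    (ncard_eq_iff_cp sat Γ Ww w p hpC.1).2 hpC
  ext v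
  simp only [minOnRel, Set.mem_setOf_eq, Set.mem_inter_iff]
  constructor
  · rintro ⟨⟨hvP, hvW⟩, hmin⟩
    have hvC : v ∈ cpCls sat (↑Γ) Ww w := by
      by_contra hvc
      have hlt : (agreeSet sat (↑Γ) w v).ncard < Γ.card :=
        lt_of_le_of_ne (ncard_agree_le sat Γ w v)
          (fun h => hvc ((ncard_eq_iff_cp sat Γ Ww w v hvW).1 h))
      exact hmin p ⟨hpP, hpC.1⟩ ⟨Or.inl (by rw [hpcard]; exact hlt),
        fun h => by
          rcases h with h | ⟨h, _⟩
          · exact absurd (hpcard ▸ h) (not_lt.2 (le_of_lt hlt))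
          · exact absurd (hpcard ▸ h.symm) (ne_of_lt hlt).symm⟩
    refine ⟨⟨hvP, hvC⟩, ?_⟩
    rintro u ⟨huP, huC⟩ ⟨⟨_, _, hpre⟩, hnc⟩
    have hucard : (agreeSet sat (↑Γ) w u).ncard = Γ.card :=
      (ncard_eq_iff_cp sat Γ Ww w u huC.1).2 huC
    have hvcard : (agreeSet sat (↑Γ) w v).ncard = Γ.card :=
      (ncard_eq_iff_cp sat Γ Ww w v hvW).2 hvC
    refine hmin u ⟨huP, huC.1⟩ ⟨Or.inr ⟨by rw [hucard, hvcard], hpre⟩, ?_⟩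
    rintro (h | ⟨_, h⟩)
    · rw [hucard, hvcard] at h; exact lt_irrefl _ h
    · exact hnc ⟨hvC, huC, h⟩
  · rintro ⟨⟨hvP, hvC⟩, hmin⟩
    have hvcard : (agreeSet sat (↑Γ) w v).ncard = Γ.card :=
      (ncard_eq_iff_cp sat Γ Ww w v hvC.1).2 hvC
    refine ⟨⟨hvP, hvC.1⟩, ?_⟩
    rintro u ⟨huP, huW⟩ ⟨hncuv, hncvu⟩
    have hucard : (agreeSet sat (↑Γ) w u).ncard = Γ.card := by
      rcases hncuv with h | ⟨h, _⟩
      · exact absurd (hvcard ▸ h) (not_lt.2 (ncard_agree_le sat Γ w u))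
      · rw [h, hvcard]
    have huC : u ∈ cpCls sat (↑Γ) Ww w := (ncard_eq_iff_cp sat Γ Ww w u huW).1 hucard
    have hpre : pre u v := by
      rcases hncuv with h | ⟨_, h⟩
      · rw [hucard, hvcard] at h; exact absurd h (lt_irrefl _)
      · exact h
    exact hmin u ⟨huP, huC⟩ ⟨⟨huC, hvC, hpre⟩,
      fun ⟨_, _, h⟩ => hncvu (Or.inr ⟨by rw [hucard, hvcard], h⟩)⟩
end

section
/- MS implies CP: for any conditional model and finite Γ, if w ∈ ⟦[φ,Γ]ψ⟧_MS then w ∈ ⟦[φ,Γ]ψ⟧_CP. -/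
open Set

/-- Minimal elements of `S` within domain `D` w.r.t. the strict part of `r`. -/
def minElemsOn {W : Type*} (r : W → W → Prop) (D S : Set W) : Set W :=
  {v | v ∈ S ∩ D ∧ ∀ u ∈ S ∩ D, ¬ (r u v ∧ ¬ r v u)}

theorem ms_implies_cp {W F : Type*} (sat : W → F → Prop) (Γ : Finset F)
    (Ww : Set W) (pre : W → W → Prop) (w : W) (P Q : Set W)
    (h : minElemsOn (msRel sat (↑Γ) pre w) Ww P ⊆ Q) :
    minElemsOn (cpRel sat (↑Γ) Ww pre w) (cpCls sat (↑Γ) Ww w) P ⊆ Q := by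
  intro v hv
  obtain ⟨⟨hvP, hvC⟩, hmin⟩ := hv
  have hvCls : v ∈ cpCls sat (↑Γ) Ww w := hvC
  obtain ⟨hvW, hvAg⟩ := hvCls
  have hvFull : agreeSet sat (↑Γ) w v = (↑Γ : Set F) := by
    apply Set.eq_of_subset_of_subset
    · intro γ hγ; exact hγ.1
    · intro γ hγ; exact ⟨hγ, hvAg γ hγ⟩
  apply h
  refine ⟨⟨hvP, hvW⟩, ?_⟩
  intro u hu hcon
  obtain ⟨huv, hnvu⟩ := hcon
  have hsub : agreeSet sat (↑Γ) w u ⊆ (↑Γ : Set F) := fun γ hγ => hγ.1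
  have heq : agreeSet sat (↑Γ) w v = agreeSet sat (↑Γ) w u := by
    rcases huv with hssub | ⟨he, _⟩
    · exact absurd (hssub.trans_subset hsub) (by rw [hvFull]; exact fun h' => h'.2 (subset_refl _))
    · exact he
  have hpre : pre u v := by
    rcases huv with hssub | ⟨_, hp⟩
    · rw [heq] at hssub; exact absurd hssub (lt_irrefl _)
    · exact hp
  have huFull : agreeSet sat (↑Γ) w u = (↑Γ : Set F) := heq ▸ hvFull
  have huCls : u ∈ cpCls sat (↑Γ) Ww w := by
    refine ⟨hu.2, fun γ hγ => ?_⟩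
    have : γ ∈ agreeSet sat (↑Γ) w u := by rw [huFull]; exact hγ
    exact this.2
  have hnpre : ¬ pre v u := fun hp => hnvu (Or.inr ⟨heq.symm, hp⟩)
  exact hmin u ⟨hu.1, huCls⟩ ⟨⟨huCls, hvC, hpre⟩, fun hc => hnpre hc.2.2⟩
end

section
/- NC semantic reduction to comparative possibility: w satisfies [φ,Γ]ψ under NC semantics iff w satisfies ◇φ → (φ∧ψ) ≺^Γ (φ∧¬ψ), where w ⊨ α ⪯^Γ β iff for every u ∈ W_w there is v ∈ W_w such that if u ⊨ β then v ⊨ α and v ⪯_w^Γ u, and α ≺^Γ β := ¬(β ⪯^Γ α). -/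
open Set

/-- Minimal elements of `S` within domain `D` w.r.t. the strict part of `r`. -/
def prefMinOn {W : Type*} (r : W → W → Prop) (D S : Set W) : Set W :=
  {v | v ∈ S ∩ D ∧ ∀ u ∈ S ∩ D, ¬ (r u v ∧ ¬ r v u)}

theorem nc_reduction_comparative_possibility {W F : Type*} (sat : W → F → Prop)
    (Γ : Finset F) (Ww : Set W) (pre : W → W → Prop) (w : W) (P Q : Set W)
    (hrefl : ∀ u ∈ Ww, pre u u)
    (htrans : ∀ u ∈ Ww, ∀ v ∈ Ww, ∀ x ∈ Ww, pre u v → pre v x → pre u x)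
    (htot : ∀ u ∈ Ww, ∀ v ∈ Ww, pre u v ∨ pre v u)
    (hwf : ∀ S : Set W, S ⊆ Ww → S.Nonempty →
      ∃ v ∈ S, ∀ u ∈ S, ¬ (pre u v ∧ ¬ pre v u)) :
    prefMinOn (ncRel sat Γ pre w) Ww P ⊆ Q ↔
      ((∃ x ∈ Ww, x ∈ P) →
        ¬ (∀ u ∈ Ww, ∃ v ∈ Ww,
            (u ∈ P ∩ Q → v ∈ P \ Q ∧ ncRel sat Γ pre w v u))) := by
  classical
  set r := ncRel sat Γ pre w with hr
  set c : W → ℕ := fun u => (agreeSet sat (↑Γ) w u).ncard with hc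
  have rtrans : ∀ u ∈ Ww, ∀ v ∈ Ww, ∀ x ∈ Ww, r u v → r v x → r u x := by
    intro u hu v hv x hx h1 h2
    rcases h1 with h1 | ⟨e1, p1⟩ <;> rcases h2 with h2 | ⟨e2, p2⟩
    · exact Or.inl (lt_trans h2 h1)
    · exact Or.inl (e2 ▸ h1)
    · exact Or.inl (e1 ▸ h2)
    · exact Or.inr ⟨e1.trans e2, htrans u hu v hv x hx p1 p2⟩
  have rtot : ∀ u ∈ Ww, ∀ v ∈ Ww, r u v ∨ r v u := by
    intro u hu v hv
    rcases lt_trichotomy (c u) (c v) with h | h | h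
    · exact Or.inr (Or.inl h)
    · rcases htot u hu v hv with h' | h'
      · exact Or.inl (Or.inr ⟨h, h'⟩)
      · exact Or.inr (Or.inr ⟨h.symm, h'⟩)
    · exact Or.inl (Or.inl h)
  have hmin : ∀ S : Set W, S ⊆ Ww → S.Nonempty →
      ∃ v ∈ S, ∀ u ∈ S, ¬ (r u v ∧ ¬ r v u) := by
    intro S hS hne
    have hbdd : BddAbove (c '' S) := by
      refine ⟨Γ.card, ?_⟩
      rintro n ⟨u, hu, rfl⟩
      have hsub : agreeSet sat (↑Γ) w u ⊆ ↑Γ := fun x hx => hx.1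
      calc c u ≤ (↑Γ : Set F).ncard := Set.ncard_le_ncard hsub Γ.finite_toSet
        _ = Γ.card := by simp [Set.ncard_coe_finset]
    have hNmem : sSup (c '' S) ∈ c '' S := Nat.sSup_mem (hne.image c) hbdd
    obtain ⟨v0, hv0S, hv0⟩ := hNmem
    set N := sSup (c '' S) with hN
    have hle : ∀ u ∈ S, c u ≤ N := fun u hu => le_csSup hbdd ⟨u, hu, rfl⟩
    set T : Set W := {v ∈ S | c v = N} with hT
    obtain ⟨v, ⟨hvS, hvN⟩, hvmin⟩ :=
      hwf T (fun x hx => hS hx.1) ⟨v0, hv0S, hv0⟩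
    refine ⟨v, hvS, ?_⟩
    rintro u huS ⟨hruv, hnrvu⟩
    rcases hruv with hgt | ⟨heq, hpre⟩
    · have hgt' : c v < c u := hgt
      have := hle u huS
      omega
    · have huT : u ∈ T := ⟨huS, heq.trans hvN⟩
      have hnp : ¬ pre v u := fun hp => hnrvu (Or.inr ⟨heq.symm, hp⟩)
      exact hvmin u huT ⟨hpre, hnp⟩
  constructor
  · intro hsub hP hall
    obtain ⟨x, hxW, hxP⟩ := hP
    obtain ⟨m, hmS, hmmin⟩ := hmin (P ∩ Ww) inter_subset_right ⟨x, hxP, hxW⟩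
    have hmMin : m ∈ prefMinOn r Ww P := ⟨hmS, hmmin⟩
    have hmQ := hsub hmMin
    obtain ⟨v, hvW, hv⟩ := hall m hmS.2
    obtain ⟨⟨hvP, hvnQ⟩, hrvm⟩ := hv ⟨hmS.1, hmQ⟩
    have hrmv : r m v := by
      by_contra h; exact hmmin v ⟨hvP, hvW⟩ ⟨hrvm, h⟩
    have hvMin : v ∈ prefMinOn r Ww P := by
      refine ⟨⟨hvP, hvW⟩, ?_⟩
      rintro x hx ⟨hxv, hnvx⟩
      refine hmmin x hx ⟨rtrans x hx.2 v hvW m hmS.2 hxv hrvm, ?_⟩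
      intro hmx; exact hnvx (rtrans v hvW m hmS.2 x hx.2 hrvm hmx)
    exact hvnQ (hsub hvMin)
  · intro h m hm
    by_contra hmQ
    have hne : ∃ x ∈ Ww, x ∈ P := ⟨m, hm.1.2, hm.1.1⟩
    have h2 := h hne
    push_neg at h2
    obtain ⟨u, huW, hu⟩ := h2
    obtain ⟨huPQ, hnr⟩ := hu m hm.1.2
    have hnrmu : ¬ r m u := hnr ⟨hm.1.1, hmQ⟩
    rcases rtot u huW m hm.1.2 with hum | hmu
    · exact hm.2 u ⟨huPQ.1, huW⟩ ⟨hum, hnrmu⟩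
    · exact hnrmu hmu
end

section
/- Sufficiency of witnesses for clause extension (NC): if w satisfies ±α, and there exists a ⪯_w^Γ-minimal φ-world u satisfying ψ with u also satisfying ±α (the same polarity as w), then w satisfies ⟨φ, Γ∪{α}⟩ψ under NC semantics, i.e., some ⪯_w^{Γ∪{α}}-minimal φ-world satisfies ψ. -/
open Set

/-- Minimal elements of `S` within domain `D` w.r.t. the strict part of `r`. -/
def minOnSet {W : Type*} (r : W → W → Prop) (D S : Set W) : Set W :=
  {v | v ∈ S ∩ D ∧ ∀ u ∈ S ∩ D, ¬ (r u v ∧ ¬ r v u)}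

theorem nc_clause_extension {W F : Type*} [DecidableEq F] (sat : W → F → Prop)
    (Γ : Finset F) (α : F) (Ww : Set W) (pre : W → W → Prop) (w : W) (P Q : Set W)
    (hrefl : ∀ u ∈ Ww, pre u u)
    (htrans : ∀ u ∈ Ww, ∀ v ∈ Ww, ∀ x ∈ Ww, pre u v → pre v x → pre u x)
    (htot : ∀ u ∈ Ww, ∀ v ∈ Ww, pre u v ∨ pre v u)
    (hwf : ∀ S : Set W, S ⊆ Ww → S.Nonempty →
      ∃ v ∈ S, ∀ u ∈ S, ¬ (pre u v ∧ ¬ pre v u))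
    (h : ∃ u ∈ minOnSet (ncRel sat Γ pre w) Ww P, u ∈ Q ∧ (sat u α ↔ sat w α)) :
    ∃ v ∈ minOnSet (ncRel sat (insert α Γ) pre w) Ww P, v ∈ Q := by
  classical
  obtain ⟨u, ⟨huPW, hmin⟩, huQ, huα⟩ := h
  by_cases hαΓ : α ∈ Γ
  · have hins : insert α Γ = Γ := Finset.insert_eq_self.mpr hαΓ
    refine ⟨u, ?_, huQ⟩
    rw [hins]
    exact ⟨huPW, hmin⟩
  · -- α ∉ Γ
    have hfin : ∀ x : W, (agreeSet sat (↑Γ) w x).Finite := fun x =>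
      Γ.finite_toSet.subset (fun γ hγ => hγ.1)
    have hpos : ∀ x : W, (sat x α ↔ sat w α) →
        agreeSet sat (↑(insert α Γ)) w x = insert α (agreeSet sat (↑Γ) w x) := by
      intro x hx
      ext γ
      simp only [agreeSet, Set.mem_setOf_eq, Finset.coe_insert, Set.mem_insert_iff]
      constructor
      · rintro ⟨hγ | hγ, hiff⟩
        · exact Or.inl hγ
        · exact Or.inr ⟨hγ, hiff⟩
      · rintro (rfl | ⟨hγ, hiff⟩)
        · exact ⟨Or.inl rfl, hx⟩
        · exact ⟨Or.inr hγ, hiff⟩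
    have hneg : ∀ x : W, ¬(sat x α ↔ sat w α) →
        agreeSet sat (↑(insert α Γ)) w x = agreeSet sat (↑Γ) w x := by
      intro x hx
      ext γ
      simp only [agreeSet, Set.mem_setOf_eq, Finset.coe_insert, Set.mem_insert_iff]
      constructor
      · rintro ⟨hγ | hγ, hiff⟩
        · exact absurd (hγ ▸ hiff) hx
        · exact ⟨hγ, hiff⟩
      · rintro ⟨hγ, hiff⟩
        exact ⟨Or.inr hγ, hiff⟩
    have hαnot : ∀ x : W, α ∉ agreeSet sat (↑Γ) w x := by
      intro x hx
      exact hαΓ hx.1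
    have hcard_pos : ∀ x : W, (sat x α ↔ sat w α) →
        (agreeSet sat (↑(insert α Γ)) w x).ncard = (agreeSet sat (↑Γ) w x).ncard + 1 := by
      intro x hx
      rw [hpos x hx, Set.ncard_insert_of_notMem (hαnot x) (hfin x)]
    have hcard_neg : ∀ x : W, ¬(sat x α ↔ sat w α) →
        (agreeSet sat (↑(insert α Γ)) w x).ncard = (agreeSet sat (↑Γ) w x).ncard := by
      intro x hx
      rw [hneg x hx]
    refine ⟨u, ⟨huPW, ?_⟩, huQ⟩
    rintro v hv ⟨h1, h2⟩
    apply hmin v hv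
    have hu' := hcard_pos u huα
    constructor
    · -- ncRel Γ v u
      by_cases hvα : sat v α ↔ sat w α
      · have hv' := hcard_pos v hvα
        rcases h1 with h1 | ⟨heq, hp⟩
        · left; omega
        · right; exact ⟨by omega, hp⟩
      · have hv' := hcard_neg v hvα
        rcases h1 with h1 | ⟨heq, hp⟩
        · left; omega
        · left; omega
    · -- ¬ ncRel Γ u v
      intro huv
      apply h2
      by_cases hvα : sat v α ↔ sat w α
      · have hv' := hcard_pos v hvα
        rcases huv with h3 | ⟨heq, hp⟩
        · left; omega
        · right; exact ⟨by omega, hp⟩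
      · have hv' := hcard_neg v hvα
        rcases h1 with h1 | ⟨heq, hp⟩ <;> rcases huv with h3 | ⟨heq2, hp2⟩ <;>
          first
          | (left; omega)
          | (right; exact ⟨by omega, hp2⟩)
end

section
/- In the Fine model, the plain counterfactual p □→ h is false at w, but the ceteris paribus counterfactual [p, {m}]h under CP semantics is true at w. -/
open Set

inductive FW : Type
  | w : FW
  | u1 : FW
  | v1 : FW
  deriving DecidableEq

inductive FP : Type
  | p : FP
  | s : FP
  | m : FP
  | h : FP
  deriving DecidableEq

/-- Valuation of the Fine model: `u1 ⊨ p,s,h`; `v1 ⊨ p,m`; `w` satisfies nothing. -/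
def fsat : FW → FP → Prop
  | FW.u1, FP.p => True
  | FW.u1, FP.s => True
  | FW.u1, FP.h => True
  | FW.v1, FP.p => True
  | FW.v1, FP.m => True
  | _, _ => False

/-- Similarity rank from `w`: `w` most similar, then `v1`, then `u1`. -/
def frank : FW → ℕ
  | FW.w => 0
  | FW.v1 => 1
  | FW.u1 => 2

/-- The similarity order `⪯_w` of the Fine model. -/
def fpre (a b : FW) : Prop := frank a ≤ frank b

theorem fine_model_nixon :
    ¬ (minOnRel fpre Set.univ {x | fsat x FP.p} ⊆ {x | fsat x FP.h}) ∧
    (minOnRel (cpRel fsat {FP.m} Set.univ fpre FW.w) (cpCls fsat {FP.m} Set.univ FW.w)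
        {x | fsat x FP.p} ⊆ {x | fsat x FP.h}) := by
  constructor
  · intro hsub
    have : FW.v1 ∈ minOnRel fpre Set.univ {x | fsat x FP.p} := by
      constructor
      · simp [fsat]
      · rintro u ⟨hu, -⟩
        cases u <;> simp_all [fpre, frank, fsat]
    exact (hsub this : fsat FW.v1 FP.h)
  · rintro x ⟨⟨hxp, hxc⟩, -⟩
    cases x
    · exact absurd hxp (by simp [fsat])
    · simp [fsat]
    · exfalso
      have := hxc.2 FP.m (by simp)
      simp [fsat] at this
end
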